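/- For every natural number r, the following hold for k_r: (i) ∑ k_r = 1; (ii) min(∑⁺ k_r, ∑⁻ k_r) = ∑⁻ k_r; and (iii) ∑⁻ k_r = (3^{r+1}+1)/2 − 1. -/

import Mathlib

/-- Entries of the 2×3 matrix `M₀` with rows (1,0,1) and (0,1,1), as a function on ℕ. -/
def M0nat : ℕ → ℕ → ℤ
  | 0, 0 => 1
  | 0, 1 => 0
  | 0, 2 => 1
  | 1, 0 => 0
  | 1, 1 => 1
  | 1, 2 => 1
  | _, _ => 0

/-- Entries of the matrix `M_r` (with `3^(r+1) - 1` rows and `3^(r+1)` columns):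
`M_0` is as above, and `M_{r+1}` is the vertical stack of `M_r ⊗ (1,1,1)`
(first `3^(r+1) - 1` rows) and `I_{3^(r+1)} ⊗ M_0` (remaining `2·3^(r+1)` rows).
In the Kronecker product, row/column pairs are ordered lexicographically, i.e.
`(A ⊗ B) (p·i + s) (q·j + t) = A i j * B s t` for `B` of size `p × q`. -/
def Mnat : ℕ → ℕ → ℕ → ℤ
  | 0, i, j => M0nat i j
  | r + 1, i, j =>
    if i < 3 ^ (r + 1) - 1 then
      -- block `M_r ⊗ (1,1,1)`
      Mnat r i (j / 3)
    else
      -- block `I_{3^(r+1)} ⊗ M_0`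
      if (i - (3 ^ (r + 1) - 1)) / 2 = j / 3 then
        M0nat ((i - (3 ^ (r + 1) - 1)) % 2) (j % 3)
      else 0

/-- The matrix `M_r`. -/
def Mmat (r : ℕ) : Matrix (Fin (3 ^ (r + 1) - 1)) (Fin (3 ^ (r + 1))) ℤ :=
  Matrix.of fun i j => Mnat r i.val j.val

/-- Components of the vector `k_r` of length `3^(r+1)`:
`k_0 = (1,1,-1)` and `k_{r+1} = (k_r, k_r, -k_r)`. -/
def knat : ℕ → ℕ → ℤ
  | 0, j => if j = 2 then -1 else 1
  | r + 1, j => if j < 2 * 3 ^ (r + 1) then knat r (j % 3 ^ (r + 1)) else -knat r (j % 3 ^ (r + 1))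

/-- The vector `k_r`. -/
def kvec (r : ℕ) : Fin (3 ^ (r + 1)) → ℤ := fun j => knat r j.val

/-- `∑⁺ a`: the sum of the positive components of an integer vector `a`. -/
def sumPos {n : ℕ} (a : Fin n → ℤ) : ℤ := ∑ j, max (a j) 0

/-- `∑⁻ a`: the sum of the absolute values of the negative components of `a`. -/
def sumNeg {n : ℕ} (a : Fin n → ℤ) : ℤ := ∑ j, max (-a j) 0

/-- For every natural number `r`: (i) `∑ k_r = 1`; (ii) `min(∑⁺ k_r, ∑⁻ k_r) = ∑⁻ k_r`;
(iii) `∑⁻ k_r = (3^(r+1)+1)/2 - 1`. -/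
lemma key (r : ℕ) (g : ℤ → ℤ) :
    ∑ j ∈ Finset.range (3 ^ (r + 2)), g (knat (r + 1) j)
      = 2 * ∑ j ∈ Finset.range (3 ^ (r + 1)), g (knat r j)
        + ∑ j ∈ Finset.range (3 ^ (r + 1)), g (-knat r j) := by
  set n := 3 ^ (r + 1) with hn
  have h3 : 3 ^ (r + 2) = n + (n + n) := by rw [hn]; ring
  rw [h3, Finset.sum_range_add, Finset.sum_range_add]
  have e1 : ∀ j ∈ Finset.range n, g (knat (r + 1) j) = g (knat r j) := by
    intro j hj
    simp only [Finset.mem_range] at hj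
    simp [knat, Nat.mod_eq_of_lt hj, show j < 2 * n by omega, ← hn]
  have e2 : ∀ j ∈ Finset.range n, g (knat (r + 1) (n + j)) = g (knat r j) := by
    intro j hj
    simp only [Finset.mem_range] at hj
    have : (n + j) % n = j := by rw [Nat.add_mod_left, Nat.mod_eq_of_lt hj]
    simp [knat, this, show n + j < 2 * n by omega, ← hn]
  have e3 : ∀ j ∈ Finset.range n, g (knat (r + 1) (n + (n + j))) = g (-knat r j) := by
    intro j hj
    simp only [Finset.mem_range] at hj
    have : (n + (n + j)) % n = j := by
      rw [Nat.add_mod_left, Nat.add_mod_left, Nat.mod_eq_of_lt hj]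
    simp [knat, this, show ¬ n + (n + j) < 2 * n by omega, ← hn]
  rw [Finset.sum_congr rfl e1, Finset.sum_congr rfl e2, Finset.sum_congr rfl e3]
  ring

lemma main (r : ℕ) :
    (∑ j ∈ Finset.range (3 ^ (r + 1)), knat r j = 1) ∧
    (∑ j ∈ Finset.range (3 ^ (r + 1)), max (knat r j) 0
      = (∑ j ∈ Finset.range (3 ^ (r + 1)), max (-knat r j) 0) + 1) ∧
    (2 * ∑ j ∈ Finset.range (3 ^ (r + 1)), max (-knat r j) 0 = 3 ^ (r + 1) - 1) := by
  induction r with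
  | zero =>
    norm_num [Finset.sum_range_succ, knat]
  | succ r ih =>
    obtain ⟨hS, hP, hN⟩ := ih
    have k1 := key r id
    have k2 := key r (fun x => max x 0)
    have k3 := key r (fun x => max (-x) 0)
    simp only [id] at k1
    simp only [neg_neg] at k2 k3
    refine ⟨?_, ?_, ?_⟩
    · rw [k1]
      have : ∑ j ∈ Finset.range (3 ^ (r + 1)), -knat r j
          = -∑ j ∈ Finset.range (3 ^ (r + 1)), knat r j := by
        rw [Finset.sum_neg_distrib]
      rw [this, hS]; ring
    · rw [k2, k3]; linarith
    · rw [k3]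
      have h32 : (3 : ℤ) ^ (r + 1 + 1) = 3 * 3 ^ (r + 1) := by ring
      rw [h32]; linarith

theorem kvec_sums (r : ℕ) :
    (∑ j, kvec r j = 1) ∧
      min (sumPos (kvec r)) (sumNeg (kvec r)) = sumNeg (kvec r) ∧
      sumNeg (kvec r) = ((3 : ℤ) ^ (r + 1) + 1) / 2 - 1 := by
  have h := main r
  obtain ⟨hS, hP, hN⟩ := h
  have eS : ∑ j, kvec r j = ∑ j ∈ Finset.range (3 ^ (r + 1)), knat r j :=
    Fin.sum_univ_eq_sum_range _ _
  have eP : sumPos (kvec r) = ∑ j ∈ Finset.range (3 ^ (r + 1)), max (knat r j) 0 := by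
    simp only [sumPos, kvec]; exact Fin.sum_univ_eq_sum_range (fun j => max (knat r j) 0) _
  have eN : sumNeg (kvec r) = ∑ j ∈ Finset.range (3 ^ (r + 1)), max (-knat r j) 0 := by
    simp only [sumNeg, kvec]; exact Fin.sum_univ_eq_sum_range (fun j => max (-knat r j) 0) _
  refine ⟨by rw [eS, hS], ?_, ?_⟩
  · rw [eP, eN, hP]
    exact min_eq_right (by linarith)
  · rw [eN]
    generalize hT : (3 : ℤ) ^ (r + 1) = T at hN ⊢
    omega
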